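/- Let B be an r×N real matrix with columns b_1,...,b_N, let C = B Bᵀ, and let (λ_i, w_i), 1 ≤ i ≤ r, be an orthonormal eigendecomposition of C with all λ_i > 0. Set γ_i = 1/λ_i, define the r×N matrices G and H by G_{ij} = b_jᵀ w_i and H_{ij} = γ_i G_{ij}, and for a subset S ⊆ {1,...,N} define the vector z^{(S)} ∈ ℝ^r by z^{(S)}_i = γ_i Σ_{j∈S} G_{ij}² and the r×r matrix A^{(S)} = Σ_{j∈S} h_j h_jᵀ, where h_j is the j-th column of H. Let E ⊆ {1,...,r} and let K be the N×N projection kernel K = Σ_{i∈E} λ_i^{-1} (Bᵀ w_i)(Bᵀ w_i)ᵀ. Let Y ⊆ {1,...,N} be a (possibly empty) set such that the submatrix K_Y is invertible, and define the conditional kernel K^Y = K_{Ȳ} − K_{ȲY} (K_Y)^{-1} K_{YȲ}, where Ȳ = {1,...,N} \ Y. Then for every S ⊆ {1,...,N}, Σ_{j ∈ S\Y} (K^Y)_{jj} = 𝟙ᵀ z^{(S)}_E − 𝟙ᵀ [ (K_Y)^{-1} ∘ ( G_{EY}ᵀ A^{(S)}_E G_{EY} ) ] 𝟙, where ∘ denotes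 the entrywise (Hadamard) product, 𝟙 is the all-ones vector, z^{(S)}_E is the restriction of z^{(S)} to the indices in E, A^{(S)}_E is the submatrix of A^{(S)} with rows and columns in E, and G_{EY} is the submatrix of G with rows in E and columns in Y. -/

import Mathlib

open Matrix

noncomputable section

/-- `G i j = b_jᵀ w_i`, where `b_j` is the `j`-th column of `B`. -/
def treeG {r N : ℕ} (B : Matrix (Fin r) (Fin N) ℝ) (w : Fin r → Fin r → ℝ) :
    Matrix (Fin r) (Fin N) ℝ :=
  fun i j => ∑ a, B a j * w i a

/-- `H i j = γ_i G i j` with `γ_i = 1/λ_i`. -/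
def treeH {r N : ℕ} (lam : Fin r → ℝ) (B : Matrix (Fin r) (Fin N) ℝ)
    (w : Fin r → Fin r → ℝ) : Matrix (Fin r) (Fin N) ℝ :=
  fun i j => (lam i)⁻¹ * treeG B w i j

/-- `z^{(S)}_i = γ_i ∑_{j ∈ S} G_{ij}²`. -/
def treeZ {r N : ℕ} (lam : Fin r → ℝ) (B : Matrix (Fin r) (Fin N) ℝ)
    (w : Fin r → Fin r → ℝ) (S : Finset (Fin N)) : Fin r → ℝ :=
  fun i => (lam i)⁻¹ * ∑ j ∈ S, (treeG B w i j) ^ 2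

/-- `A^{(S)} = ∑_{j ∈ S} h_j h_jᵀ`, `h_j` the `j`-th column of `H`. -/
def treeA {r N : ℕ} (lam : Fin r → ℝ) (B : Matrix (Fin r) (Fin N) ℝ)
    (w : Fin r → Fin r → ℝ) (S : Finset (Fin N)) : Matrix (Fin r) (Fin r) ℝ :=
  fun i₁ i₂ => ∑ j ∈ S, treeH lam B w i₁ j * treeH lam B w i₂ j

/-- The projection kernel `K = ∑_{i ∈ E} λ_i⁻¹ (Bᵀ w_i)(Bᵀ w_i)ᵀ`. -/
def treeK {r N : ℕ} (lam : Fin r → ℝ) (B : Matrix (Fin r) (Fin N) ℝ)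
    (w : Fin r → Fin r → ℝ) (E : Finset (Fin r)) : Matrix (Fin N) (Fin N) ℝ :=
  fun a b => ∑ i ∈ E, (lam i)⁻¹ * ((Bᵀ *ᵥ w i) a) * ((Bᵀ *ᵥ w i) b)

/-- The conditional kernel `K^Y = K_{Ȳ} − K_{ȲY} (K_Y)⁻¹ K_{YȲ}`, indexed by `Ȳ = Yᶜ`. -/
def condKernel {N : ℕ} (K : Matrix (Fin N) (Fin N) ℝ) (Y : Finset (Fin N)) :
    Matrix ↥(Yᶜ) ↥(Yᶜ) ℝ :=
  K.submatrix (fun a : ↥(Yᶜ) => (a : Fin N)) (fun b : ↥(Yᶜ) => (b : Fin N)) -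
    K.submatrix (fun a : ↥(Yᶜ) => (a : Fin N)) (fun b : ↥Y => (b : Fin N)) *
      (K.submatrix (fun a : ↥Y => (a : Fin N)) (fun b : ↥Y => (b : Fin N)))⁻¹ *
      K.submatrix (fun a : ↥Y => (a : Fin N)) (fun b : ↥(Yᶜ) => (b : Fin N))

/-- **Proposition 1 of Gillenwater et al.** (tree-based DPP sampling):
`∑_{j ∈ S \ Y} (K^Y)_{jj} = 𝟙ᵀ z^{(S)}_E − 𝟙ᵀ [ (K_Y)⁻¹ ∘ ( G_{EY}ᵀ A^{(S)}_E G_{EY} ) ] 𝟙`. -/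
theorem tree_based_marginal {r N : ℕ} (B : Matrix (Fin r) (Fin N) ℝ)
    (lam : Fin r → ℝ) (w : Fin r → Fin r → ℝ)
    (hlam : ∀ i, 0 < lam i)
    (horth : ∀ i j, w i ⬝ᵥ w j = if i = j then (1 : ℝ) else 0)
    (heig : ∀ i, (B * Bᵀ) *ᵥ w i = lam i • w i)
    (E : Finset (Fin r)) (Y : Finset (Fin N))
    (hY : IsUnit ((treeK lam B w E).submatrix (fun a : ↥Y => (a : Fin N))
      (fun b : ↥Y => (b : Fin N))).det)
    (S : Finset (Fin N)) :
    (∑ j ∈ (S \ Y).attach,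
        condKernel (treeK lam B w E) Y
          ⟨(j : Fin N), Finset.mem_compl.mpr (Finset.mem_sdiff.mp j.2).2⟩
          ⟨(j : Fin N), Finset.mem_compl.mpr (Finset.mem_sdiff.mp j.2).2⟩)
    = (∑ i ∈ E, treeZ lam B w S i) -
        ∑ a : ↥Y, ∑ b : ↥Y,
          ((treeK lam B w E).submatrix (fun a : ↥Y => (a : Fin N))
              (fun b : ↥Y => (b : Fin N)))⁻¹ a b *
            (((treeG B w).submatrix (fun i : ↥E => (i : Fin r)) (fun b : ↥Y => (b : Fin N)))ᵀ *
              (treeA lam B w S).submatrix (fun i : ↥E => (i : Fin r)) (fun i : ↥E => (i : Fin r)) *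
              (treeG B w).submatrix (fun i : ↥E => (i : Fin r)) (fun b : ↥Y => (b : Fin N))) a b := by
  classical
  set M := treeK lam B w E with hM
  set KY := M.submatrix (fun a : ↥Y => (a : Fin N)) (fun b : ↥Y => (b : Fin N)) with hKY
  have hG : ∀ i a, (Bᵀ *ᵥ w i) a = treeG B w i a := by
    intro i a
    simp [Matrix.mulVec, dotProduct, treeG, Matrix.transpose_apply]
  have hMG : ∀ a b, M a b = ∑ i ∈ E, (lam i)⁻¹ * treeG B w i a * treeG B w i b := by
    intro a b
    simp only [hM, treeK, hG]
  have hsym : ∀ a b, M a b = M b a := by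
    intro a b
    rw [hMG, hMG]
    exact Finset.sum_congr rfl fun i _ => by ring
  set f : Fin N → ℝ :=
    fun j => M j j - ∑ a : ↥Y, ∑ b : ↥Y, KY⁻¹ a b * M ↑a j * M j ↑b with hf
  -- LHS equals sum of f over S \ Y
  have hLHS : (∑ j ∈ (S \ Y).attach,
      condKernel (treeK lam B w E) Y
        ⟨(j : Fin N), Finset.mem_compl.mpr (Finset.mem_sdiff.mp j.2).2⟩
        ⟨(j : Fin N), Finset.mem_compl.mpr (Finset.mem_sdiff.mp j.2).2⟩)
      = ∑ j ∈ S \ Y, f j := by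
    rw [← Finset.sum_attach (S \ Y) f]
    refine Finset.sum_congr rfl fun j _ => ?_
    simp only [condKernel, Matrix.sub_apply, Matrix.submatrix_apply, Matrix.mul_apply, hf]
    rw [← hM, ← hKY]
    congr 1
    rw [Finset.sum_comm]
    refine Finset.sum_congr rfl fun a _ => ?_
    rw [Finset.sum_mul]
    refine Finset.sum_congr rfl fun b _ => ?_
    rw [hsym (↑b) (↑j), hsym (↑a) (↑j)]
    ring
  -- z term equals sum of diagonal over S
  have hz : (∑ i ∈ E, treeZ lam B w S i) = ∑ j ∈ S, M j j := by
    simp only [treeZ, Finset.mul_sum]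
    rw [Finset.sum_comm]
    refine Finset.sum_congr rfl fun j _ => ?_
    rw [hMG]
    refine Finset.sum_congr rfl fun i _ => by ring
  -- the Hadamard term
  have hP : ∀ a b : ↥Y,
      (((treeG B w).submatrix (fun i : ↥E => (i : Fin r)) (fun b : ↥Y => (b : Fin N)))ᵀ *
        (treeA lam B w S).submatrix (fun i : ↥E => (i : Fin r)) (fun i : ↥E => (i : Fin r)) *
        (treeG B w).submatrix (fun i : ↥E => (i : Fin r)) (fun b : ↥Y => (b : Fin N))) a b
      = ∑ j ∈ S, M ↑a j * M j ↑b := by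
    intro a b
    set T : ↥E → ↥E → Fin N → ℝ := fun i₂ i₁ j =>
      treeG B w ↑i₁ ↑a * ((lam ↑i₁)⁻¹ * treeG B w ↑i₁ j * ((lam ↑i₂)⁻¹ * treeG B w ↑i₂ j)) *
        treeG B w ↑i₂ ↑b with hT
    have hstep : ∀ j ∈ S, M ↑a j * M j ↑b = ∑ i₂ : ↥E, ∑ i₁ : ↥E, T i₂ i₁ j := by
      intro j _
      rw [hMG, hMG, ← Finset.sum_coe_sort E fun i => (lam i)⁻¹ * treeG B w i ↑a * treeG B w i j,
        ← Finset.sum_coe_sort E fun i => (lam i)⁻¹ * treeG B w i j * treeG B w i ↑b,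
        Finset.sum_mul_sum, Finset.sum_comm]
      exact Finset.sum_congr rfl fun i₂ _ => Finset.sum_congr rfl fun i₁ _ => by
        simp only [hT]; ring
    rw [Finset.sum_congr rfl hstep]
    have hmain : (((treeG B w).submatrix (fun i : ↥E => (i : Fin r))
          (fun b : ↥Y => (b : Fin N)))ᵀ *
        (treeA lam B w S).submatrix (fun i : ↥E => (i : Fin r)) (fun i : ↥E => (i : Fin r)) *
        (treeG B w).submatrix (fun i : ↥E => (i : Fin r)) (fun b : ↥Y => (b : Fin N))) a b
        = ∑ i₂ : ↥E, ∑ i₁ : ↥E, ∑ j ∈ S, T i₂ i₁ j := by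
      simp only [Matrix.mul_apply, Matrix.submatrix_apply, Matrix.transpose_apply, treeA, treeH,
        Finset.sum_mul, Finset.mul_sum]
      try exact Finset.sum_congr rfl fun i₂ _ => Finset.sum_congr rfl fun i₁ _ =>
        Finset.sum_congr rfl fun j _ => by simp only [hT]; ring
      rfl
    rw [hmain]
    calc ∑ i₂ : ↥E, ∑ i₁ : ↥E, ∑ j ∈ S, T i₂ i₁ j
        = ∑ i₂ : ↥E, ∑ j ∈ S, ∑ i₁ : ↥E, T i₂ i₁ j :=
          Finset.sum_congr rfl fun i₂ _ => Finset.sum_comm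
      _ = ∑ j ∈ S, ∑ i₂ : ↥E, ∑ i₁ : ↥E, T i₂ i₁ j := Finset.sum_comm
  -- f vanishes on Y
  have hfY : ∀ j ∈ Y, f j = 0 := by
    intro j hj
    have hjj : (⟨j, hj⟩ : ↥Y) ∈ (Finset.univ : Finset ↥Y) := Finset.mem_univ _
    have key : (∑ a : ↥Y, ∑ b : ↥Y, KY⁻¹ a b * M ↑a j * M j ↑b)
        = ∑ a : ↥Y, KY (⟨j, hj⟩ : ↥Y) a * ((KY⁻¹ * KY) a ⟨j, hj⟩) := by
      refine Finset.sum_congr rfl fun a _ => ?_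
      rw [Matrix.mul_apply, Finset.mul_sum]
      refine Finset.sum_congr rfl fun b _ => ?_
      simp only [hKY, Matrix.submatrix_apply]
      rw [hsym j (↑a), hsym (↑b) j]
      ring
    rw [hf]
    simp only [key, Matrix.nonsing_inv_mul KY hY, Matrix.one_apply]
    rw [Finset.sum_eq_single (⟨j, hj⟩ : ↥Y)]
    · simp [hKY]
    · intro b _ hb
      simp [hb]
    · intro h
      exact absurd hjj h
  -- assemble
  rw [hLHS, hz]
  have hsplit : ∑ j ∈ S, M j j - ∑ j ∈ S, (∑ a : ↥Y, ∑ b : ↥Y, KY⁻¹ a b * M ↑a j * M j ↑b)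
      = ∑ j ∈ S \ Y, f j := by
    rw [← Finset.sum_sub_distrib]
    have : ∑ j ∈ S, f j = ∑ j ∈ S \ Y, f j := by
      rw [← Finset.sum_inter_add_sum_sdiff S Y f,
        Finset.sum_eq_zero fun j hj => hfY j (Finset.mem_inter.mp hj).2, zero_add]
    exact this
  rw [← hsplit]
  congr 1
  rw [Finset.sum_comm]
  refine Finset.sum_congr rfl fun a _ => ?_
  rw [Finset.sum_comm]
  refine Finset.sum_congr rfl fun b _ => ?_
  rw [hP a b, Finset.mul_sum]
  exact Finset.sum_congr rfl fun j _ => (mul_assoc _ _ _)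

end
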